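/- The projection formula via CDF transform holds: if u has continuous strictly increasing CDF F and ξ has continuous strictly increasing CDF G, then E[u·Φ_k(ξ̃)] = ∫₀¹ F⁻¹(θ) Φ_k(G⁻¹(θ)) dθ, where ξ̃ = G⁻¹(F(u)). -/

import Mathlib

open MeasureTheory

/-- Projection formula via CDF transform: if `u` has continuous strictly increasing CDF `F`
and `G` is the continuous strictly increasing CDF of a random variable `ξ`, then
`E[u·Φ_k(ξ̃)] = ∫₀¹ F⁻¹(θ) Φ_k(G⁻¹(θ)) dθ`, where `ξ̃ = G⁻¹(F(u))`. -/
theorem stmt7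
    {Ω : Type*} [MeasurableSpace Ω] (P : Measure Ω) [IsProbabilityMeasure P]
    (u ξ : Ω → ℝ) (hu : Measurable u) (hξ : Measurable ξ)
    (hu_int : Integrable u P)
    (F G : ℝ → ℝ)
    (hF : ∀ t, F t = (P {ω | u ω ≤ t}).toReal)
    (hG : ∀ t, G t = (P {ω | ξ ω ≤ t}).toReal)
    (hFc : Continuous F) (hFm : StrictMono F)
    (hGc : Continuous G) (hGm : StrictMono G)
    (Φ : Polynomial ℝ)
    (hint : IntegrableOn
      (fun θ => Function.invFun F θ * Φ.eval (Function.invFun G θ)) (Set.Ioo (0 : ℝ) 1))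
    (hlhs : Integrable (fun ω => u ω * Φ.eval (Function.invFun G (F (u ω)))) P) :
    ∫ ω, u ω * Φ.eval (Function.invFun G (F (u ω))) ∂P
      = ∫ θ in Set.Ioo (0 : ℝ) 1, Function.invFun F θ * Φ.eval (Function.invFun G θ) := by
  classical
  set h : ℝ → ℝ := fun θ => Function.invFun F θ * Φ.eval (Function.invFun G θ) with hh
  have hFinj : Function.Injective F := hFm.injective
  have hFli : Function.LeftInverse (Function.invFun F) F := Function.leftInverse_invFun hFinj
  -- the pushforward of P by u
  set μ : Measure ℝ := P.map u with hμdef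
  have hμprob : IsProbabilityMeasure μ := Measure.isProbabilityMeasure_map hu.aemeasurable
  have hμIic : ∀ t, μ (Set.Iic t) = P {ω | u ω ≤ t} := fun t => by
    rw [hμdef, Measure.map_apply hu measurableSet_Iic]; rfl
  have hFcdf : ∀ t, F t = ProbabilityTheory.cdf μ t := fun t => by
    rw [hF, ProbabilityTheory.cdf_eq_real, measureReal_def, hμIic]
  -- bounds on F
  have hF0 : ∀ x, 0 ≤ F x := fun x => by rw [hF]; exact ENNReal.toReal_nonneg
  have hF1 : ∀ x, F x ≤ 1 := fun x => by
    rw [hF]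
    exact ENNReal.toReal_le_of_le_ofReal zero_le_one (by simpa using prob_le_one)
  have hFpos : ∀ x, 0 < F x := fun x =>
    lt_of_le_of_lt (hF0 (x - 1)) (hFm (by linarith))
  have hFlt1 : ∀ x, F x < 1 := fun x =>
    lt_of_lt_of_le (hFm (show x < x + 1 by linarith)) (hF1 (x + 1))
  -- surjectivity onto (0,1)
  have hbot : Filter.Tendsto F Filter.atBot (nhds 0) := by
    have := ProbabilityTheory.tendsto_cdf_atBot μ
    exact this.congr' (Filter.Eventually.of_forall fun t => (hFcdf t).symm)
  have htop : Filter.Tendsto F Filter.atTop (nhds 1) := by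
    have := ProbabilityTheory.tendsto_cdf_atTop μ
    exact this.congr' (Filter.Eventually.of_forall fun t => (hFcdf t).symm)
  have hsurj : ∀ t ∈ Set.Ioo (0 : ℝ) 1, ∃ x, F x = t := by
    intro t ht
    obtain ⟨a, ha⟩ := (hbot.eventually_lt_const ht.1).exists
    obtain ⟨b, hb⟩ := (htop.eventually_const_lt ht.2).exists
    have hab : a ≤ b := by
      by_contra hc
      exact absurd (hFm (lt_of_not_ge hc)) (not_lt.2 (le_of_lt (lt_trans ha hb)))
    obtain ⟨x, _, hx⟩ := intermediate_value_Icc hab hFc.continuousOn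
      ⟨le_of_lt ha, le_of_lt hb⟩
    exact ⟨x, hx⟩
  have hFr : ∀ t ∈ Set.Ioo (0 : ℝ) 1, F (Function.invFun F t) = t := fun t ht =>
    Function.invFun_eq (hsurj t ht)
  -- the pushforward of P by F ∘ u is the uniform measure on (0,1)
  have hmeasFu : Measurable fun ω => F (u ω) := hFc.measurable.comp hu
  have hmap : P.map (fun ω => F (u ω)) = volume.restrict (Set.Ioo (0 : ℝ) 1) := by
    refine Measure.ext_of_Iic _ _ fun t => ?_
    rw [Measure.map_apply hmeasFu measurableSet_Iic,
      Measure.restrict_apply measurableSet_Iic]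
    rcases le_or_gt t 0 with ht | ht
    · have h1 : (fun ω => F (u ω)) ⁻¹' Set.Iic t = ∅ := by
        ext ω
        simp only [Set.mem_preimage, Set.mem_Iic, Set.mem_empty_iff_false, iff_false, not_le]
        exact lt_of_le_of_lt ht (hFpos (u ω))
      have h2 : Set.Iic t ∩ Set.Ioo (0 : ℝ) 1 = ∅ := by
        ext x
        simp only [Set.mem_inter_iff, Set.mem_Iic, Set.mem_Ioo, Set.mem_empty_iff_false,
          iff_false, not_and, and_imp]
        intro hx hx0 _
        exact absurd (lt_of_le_of_lt (hx.trans ht) hx0) (lt_irrefl x)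
      rw [h1, h2]
      simp
    rcases le_or_gt 1 t with ht1 | ht1
    · have h1 : (fun ω => F (u ω)) ⁻¹' Set.Iic t = Set.univ := by
        ext ω
        simp only [Set.mem_preimage, Set.mem_Iic, Set.mem_univ, iff_true]
        exact le_of_lt (lt_of_lt_of_le (hFlt1 (u ω)) ht1)
      have h2 : Set.Iic t ∩ Set.Ioo (0 : ℝ) 1 = Set.Ioo 0 1 := by
        apply Set.inter_eq_self_of_subset_right
        intro x hx
        exact le_of_lt (lt_of_lt_of_le hx.2 ht1)
      rw [h1, h2, measure_univ, Real.volume_Ioo]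
      simp
    · -- 0 < t < 1
      have htm : t ∈ Set.Ioo (0 : ℝ) 1 := ⟨ht, ht1⟩
      have h1 : (fun ω => F (u ω)) ⁻¹' Set.Iic t = {ω | u ω ≤ Function.invFun F t} := by
        ext ω
        simp only [Set.mem_preimage, Set.mem_Iic, Set.mem_setOf_eq]
        have heq : F (u ω) ≤ t ↔ F (u ω) ≤ F (Function.invFun F t) := by rw [hFr t htm]
        rw [heq, hFm.le_iff_le]
      have h2 : Set.Iic t ∩ Set.Ioo (0 : ℝ) 1 = Set.Ioc 0 t := by
        ext x
        simp only [Set.mem_inter_iff, Set.mem_Iic, Set.mem_Ioo, Set.mem_Ioc]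
        constructor
        · rintro ⟨hx, hx0, _⟩; exact ⟨hx0, hx⟩
        · rintro ⟨hx0, hx⟩; exact ⟨hx, hx0, lt_of_le_of_lt hx ht1⟩
      rw [h1, h2, Real.volume_Ioc]
      have := hF (Function.invFun F t)
      rw [hFr t htm] at this
      rw [← ENNReal.ofReal_toReal (measure_ne_top P {ω | u ω ≤ Function.invFun F t}), ← this]
      norm_num
  -- change of variables
  have hAESM : AEStronglyMeasurable h (P.map fun ω => F (u ω)) := by
    rw [hmap]; exact hint.aestronglyMeasurable
  calc ∫ ω, u ω * Φ.eval (Function.invFun G (F (u ω))) ∂P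
      = ∫ ω, h (F (u ω)) ∂P := by
        refine integral_congr_ae (Filter.Eventually.of_forall fun ω => ?_)
        simp only [hh, hFli (u ω)]
    _ = ∫ θ, h θ ∂(P.map fun ω => F (u ω)) :=
        (integral_map hmeasFu.aemeasurable hAESM).symm
    _ = ∫ θ in Set.Ioo (0 : ℝ) 1, h θ := by rw [hmap]
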